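/- arXiv:0907.0681 — 2 statements merged into one kernel-verified Lean document; each statement's English description precedes it below -/
import Mathlib

section
/- (i) For all compactly supported f, g ∈ C₀(T), the set {s ∈ G : rt_s(g)·f ≠ 0} is contained in a compact subset of G. (ii) Consequently, for all a, b ∈ A₀, the functions s ↦ α_s(a)·b and s ↦ b·α_s(a) from G to A are norm-continuous and vanish outside a compact subset of G; in particular they are Bochner integrable with respect to any left Haar measure on G. -/
open MeasureTheory ZeroAtInfty MultiplierAlgebra

noncomputable section

variable (G T A : Type*) [Group G] [TopologicalSpace G] [IsTopologicalGroup G]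
  [LocallyCompactSpace G] [T2Space G]
  [TopologicalSpace T] [LocallyCompactSpace T] [T2Space T]
  [NonUnitalCStarAlgebra A]

/-- The data of a free and proper right action of `G` on `T`, a strongly continuous action `α`
of `G` on the C*-algebra `A`, and an `rt`–`α` equivariant nondegenerate *-homomorphism
`φ : C₀(T) → M(A)`. -/
structure FreeProperSetup : Type _ where
  /-- the right action of `G` on `T` -/
  ρ : T → G → T
  ρ_continuous : Continuous fun p : T × G => ρ p.1 p.2
  ρ_one : ∀ t, ρ t 1 = t
  ρ_mul : ∀ t s s', ρ (ρ t s) s' = ρ t (s * s')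
  ρ_free : ∀ t s, ρ t s = t → s = 1
  ρ_proper : IsProperMap fun p : T × G => (p.1, ρ p.1 p.2)
  /-- the induced action on `C₀(T)` -/
  rt : G → C₀(T, ℂ) → C₀(T, ℂ)
  rt_apply : ∀ (s : G) (f : C₀(T, ℂ)) (t : T), rt s f t = f (ρ t s)
  /-- the action of `G` on `A` by *-automorphisms -/
  α : G → A ≃⋆ₐ[ℂ] A
  α_mul : ∀ (s s' : G) (a : A), α (s * s') a = α s (α s' a)
  α_continuous : ∀ a : A, Continuous fun s => α s a
  /-- the nondegenerate equivariant *-homomorphism `φ : C₀(T) → M(A)` -/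
  φ : C₀(T, ℂ) →⋆ₙₐ[ℂ] 𝓜(ℂ, A)
  φ_nondegenerate :
    Dense (Submodule.span ℂ {x : A | ∃ (f : C₀(T, ℂ)) (a : A), (x : 𝓜(ℂ, A)) = φ f * a} : Set A)
  φ_equivariant : ∀ (s : G) (f : C₀(T, ℂ)) (a x : A),
    (x : 𝓜(ℂ, A)) = φ f * a →
      ((α s x : A) : 𝓜(ℂ, A)) = φ (rt s f) * ((α s a : A) : 𝓜(ℂ, A))

variable {G T A}

/-- `A₀` is the linear span of `φ(f)·a·φ(g)` for `a ∈ A` and compactly supported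
`f, g ∈ C₀(T)`, regarded as a subset of `A`. -/
def FreeProperSetup.A₀ (S : FreeProperSetup G T A) : Set A :=
  {x : A | (x : 𝓜(ℂ, A)) ∈ Submodule.span ℂ
    {y : 𝓜(ℂ, A) | ∃ f g : C₀(T, ℂ), HasCompactSupport ⇑f ∧ HasCompactSupport ⇑g ∧
      ∃ a : A, y = S.φ f * (a : 𝓜(ℂ, A)) * S.φ g}}

/-! ### Auxiliary lemmas about the multiplier algebra -/

private lemma my_cancel_left {c d : A} (h : ∀ y : A, c * y = d * y) : c = d := by
  have h0 : (c - d) * star (c - d) = 0 := by rw [sub_mul, h, sub_self]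
  have hn : ‖c - d‖ * ‖c - d‖ = 0 := by rw [← CStarRing.norm_self_mul_star, h0, norm_zero]
  have h1 : ‖c - d‖ = 0 := mul_self_eq_zero.mp hn
  rwa [norm_eq_zero, sub_eq_zero] at h1

private lemma my_cancel_right {c d : A} (h : ∀ y : A, y * c = y * d) : c = d := by
  have h0 : star (c - d) * (c - d) = 0 := by rw [mul_sub, h, sub_self]
  have hn : ‖c - d‖ * ‖c - d‖ = 0 := by rw [← CStarRing.norm_star_mul_self, h0, norm_zero]
  have h1 : ‖c - d‖ = 0 := mul_self_eq_zero.mp hn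
  rwa [norm_eq_zero, sub_eq_zero] at h1

private lemma my_coe_inj {a b : A} (h : (a : 𝓜(ℂ, A)) = b) : a = b := by
  apply my_cancel_left
  intro y
  have := congrArg (fun m : 𝓜(ℂ, A) => m.fst y) h
  simpa using this

private lemma my_mul_coe (m : 𝓜(ℂ, A)) (a : A) :
    m * (a : 𝓜(ℂ, A)) = ((m.fst a : A) : 𝓜(ℂ, A)) := by
  refine DoubleCentralizer.ext _ _ _ _ (Prod.ext ?_ ?_)
  · ext y
    show m.fst (a * y) = m.fst a * y
    apply my_cancel_right
    intro x
    rw [← m.central, ← mul_assoc, m.central, mul_assoc]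
  · ext y
    exact m.central y a

private lemma my_coe_mul (a : A) (m : 𝓜(ℂ, A)) :
    (a : 𝓜(ℂ, A)) * m = ((m.snd a : A) : 𝓜(ℂ, A)) := by
  refine DoubleCentralizer.ext _ _ _ _ (Prod.ext ?_ ?_)
  · ext y
    exact (m.central a y).symm
  · ext y
    show m.snd (y * a) = y * m.snd a
    apply my_cancel_left
    intro z
    rw [m.central, mul_assoc, ← m.central a z, ← mul_assoc]

private lemma my_coe_star (a : A) : ((star a : A) : 𝓜(ℂ, A)) = star (a : 𝓜(ℂ, A)) :=
  map_star (DoubleCentralizer.coeHom (𝕜 := ℂ) (A := A)) a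

private lemma my_coe_zero : ((0 : A) : 𝓜(ℂ, A)) = 0 :=
  map_zero (DoubleCentralizer.coeHom (𝕜 := ℂ) (A := A))

private lemma my_coe_add (a b : A) : ((a + b : A) : 𝓜(ℂ, A)) = (a : 𝓜(ℂ, A)) + b :=
  map_add (DoubleCentralizer.coeHom (𝕜 := ℂ) (A := A)) a b

private lemma my_coe_smul (r : ℂ) (a : A) :
    ((r • a : A) : 𝓜(ℂ, A)) = r • (a : 𝓜(ℂ, A)) :=
  map_smul (DoubleCentralizer.coeHom (𝕜 := ℂ) (A := A)) r a

private lemma my_coe_mul2 (a b : A) : ((a * b : A) : 𝓜(ℂ, A)) = (a : 𝓜(ℂ, A)) * b :=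
  map_mul (DoubleCentralizer.coeHom (𝕜 := ℂ) (A := A)) a b

namespace FreeProperSetup

/-! ### Part (i) -/

lemma partI (S : FreeProperSetup G T A) (f g : C₀(T, ℂ)) (hf : HasCompactSupport ⇑f)
    (hg : HasCompactSupport ⇑g) :
    ∃ C : Set G, IsCompact C ∧ {s : G | S.rt s g * f ≠ 0} ⊆ C := by
  have hK : IsCompact ((fun p : T × G => (p.1, S.ρ p.1 p.2)) ⁻¹'
      (tsupport ⇑f ×ˢ tsupport ⇑g)) :=
    S.ρ_proper.isCompact_preimage (hf.prod hg)
  refine ⟨Prod.snd '' _, hK.image continuous_snd, ?_⟩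
  intro s hs
  obtain ⟨t, ht⟩ : ∃ t, (S.rt s g * f) t ≠ 0 := by
    by_contra h
    push_neg at h
    exact hs (ZeroAtInftyContinuousMap.ext fun t => by simpa using h t)
  have hmul : S.rt s g t * f t ≠ 0 := ht
  obtain ⟨h1, h2⟩ := mul_ne_zero_iff.mp hmul
  rw [S.rt_apply] at h1
  exact ⟨(t, s), ⟨subset_closure h2, subset_closure h1⟩, rfl⟩

/-! ### Equivariance on the right -/

private lemma rt_star (S : FreeProperSetup G T A) (s : G) (g : C₀(T, ℂ)) :
    star (S.rt s (star g)) = S.rt s g := by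
  ext t
  have h1 : (star (S.rt s (star g))) t = star ((S.rt s (star g)) t) := rfl
  rw [h1, S.rt_apply, S.rt_apply]
  have h2 : (star g) (S.ρ t s) = star (g (S.ρ t s)) := rfl
  rw [h2, star_star]

private lemma star_α (S : FreeProperSetup G T A) (s : G) (a : A) :
    star (S.α s (star a)) = S.α s a := by
  have := map_star (S.α s) (star a)
  rw [star_star] at this
  exact this.symm

private lemma equivR (S : FreeProperSetup G T A) (s : G) (g : C₀(T, ℂ)) (a x : A)
    (hx : (x : 𝓜(ℂ, A)) = (a : 𝓜(ℂ, A)) * S.φ g) :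
    ((S.α s x : A) : 𝓜(ℂ, A)) = ((S.α s a : A) : 𝓜(ℂ, A)) * S.φ (S.rt s g) := by
  have h1 : ((star x : A) : 𝓜(ℂ, A)) = S.φ (star g) * ((star a : A) : 𝓜(ℂ, A)) := by
    rw [my_coe_star, my_coe_star, hx, star_mul, ← map_star S.φ g]
  have h2 := S.φ_equivariant s (star g) (star a) (star x) h1
  calc ((S.α s x : A) : 𝓜(ℂ, A))
      = star (((S.α s (star x) : A) : 𝓜(ℂ, A))) := by
        rw [← my_coe_star]
        exact congrArg _ (S.star_α s x).symm
    _ = star (S.φ (S.rt s (star g)) * ((S.α s (star a) : A) : 𝓜(ℂ, A))) := by rw [h2]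
    _ = ((S.α s a : A) : 𝓜(ℂ, A)) * S.φ (S.rt s g) := by
        rw [star_mul, ← my_coe_star, S.star_α, ← map_star S.φ, S.rt_star]

/-! ### The generator case of the vanishing statement -/

private lemma gen_vanish (S : FreeProperSetup G T A) {f g f' g' : C₀(T, ℂ)}
    (hf : HasCompactSupport ⇑f) (hg : HasCompactSupport ⇑g)
    (hf' : HasCompactSupport ⇑f') (hg' : HasCompactSupport ⇑g')
    (a b x y : A)
    (hx : (x : 𝓜(ℂ, A)) = S.φ f * (a : 𝓜(ℂ, A)) * S.φ g)
    (hy : (y : 𝓜(ℂ, A)) = S.φ f' * (b : 𝓜(ℂ, A)) * S.φ g') :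
    ∃ C : Set G, IsCompact C ∧ ∀ s ∉ C, S.α s x * y = 0 ∧ y * S.α s x = 0 := by
  obtain ⟨C₁, hC₁, hsub₁⟩ := S.partI f' g hf' hg
  obtain ⟨C₂, hC₂, hsub₂⟩ := S.partI g' f hg' hf
  refine ⟨C₁ ∪ C₂, hC₁.union hC₂, fun s hs => ?_⟩
  have hz₁ : S.rt s g * f' = 0 := by
    by_contra h; exact hs (Or.inl (hsub₁ h))
  have hz₂ : S.rt s f * g' = 0 := by
    by_contra h; exact hs (Or.inr (hsub₂ h))
  have hc : S.φ f * (a : 𝓜(ℂ, A)) = (((S.φ f).fst a : A) : 𝓜(ℂ, A)) := my_mul_coe _ _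
  have hd : (a : 𝓜(ℂ, A)) * S.φ g = (((S.φ g).snd a : A) : 𝓜(ℂ, A)) := my_coe_mul _ _
  set c : A := (S.φ f).fst a with hcdef
  set d : A := (S.φ g).snd a with hddef
  have hxc : (x : 𝓜(ℂ, A)) = (c : 𝓜(ℂ, A)) * S.φ g := by rw [hx, hc]
  have hxd : (x : 𝓜(ℂ, A)) = S.φ f * (d : 𝓜(ℂ, A)) := by rw [hx, mul_assoc, hd]
  constructor
  · have h1 := S.equivR s g c x hxc
    have hφz : S.φ (S.rt s g) * S.φ f' = 0 := by rw [← map_mul S.φ, hz₁, map_zero]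
    apply my_coe_inj (b := 0)
    rw [my_coe_mul2, h1, hy, my_coe_zero]
    simp only [mul_assoc]
    rw [← mul_assoc (S.φ (S.rt s g)) (S.φ f'), hφz, zero_mul, mul_zero]
  · have h1 := S.φ_equivariant s f d x hxd
    have hφz : S.φ g' * S.φ (S.rt s f) = 0 := by
      rw [← map_mul S.φ, mul_comm, hz₂, map_zero]
    apply my_coe_inj (b := 0)
    rw [my_coe_mul2, h1, hy, my_coe_zero]
    simp only [mul_assoc]
    rw [← mul_assoc (S.φ g') (S.φ (S.rt s f)), hφz, zero_mul, mul_zero, mul_zero]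

/-! ### The vanishing statement for all of `A₀` -/

private lemma A₀_vanish (S : FreeProperSetup G T A) {x y : A}
    (hx : x ∈ S.A₀) (hy : y ∈ S.A₀) :
    ∃ C : Set G, IsCompact C ∧ ∀ s ∉ C, S.α s x * y = 0 ∧ y * S.α s x = 0 := by
  classical
  set Sgen : Set 𝓜(ℂ, A) :=
    {m : 𝓜(ℂ, A) | ∃ f g : C₀(T, ℂ), HasCompactSupport ⇑f ∧ HasCompactSupport ⇑g ∧
      ∃ a : A, m = S.φ f * (a : 𝓜(ℂ, A)) * S.φ g} with hSgen
  have hx' : (x : 𝓜(ℂ, A)) ∈ Submodule.span ℂ Sgen := hx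
  have hy' : (y : 𝓜(ℂ, A)) ∈ Submodule.span ℂ Sgen := hy
  -- every element of the span is the image of an element of `A`
  have hrange : ∀ {n : 𝓜(ℂ, A)}, n ∈ Submodule.span ℂ Sgen →
      ∃ c : A, (c : 𝓜(ℂ, A)) = n := by
    intro n hn
    refine Submodule.span_induction (p := fun n _ => ∃ c : A, (c : 𝓜(ℂ, A)) = n)
      ?_ ?_ ?_ ?_ hn
    · rintro m ⟨f, g, hfc, hgc, a, rfl⟩
      exact ⟨(S.φ g).snd ((S.φ f).fst a), by rw [← my_coe_mul, ← my_mul_coe]⟩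
    · exact ⟨0, my_coe_zero⟩
    · rintro m₁ m₂ _ _ ⟨c₁, hc₁⟩ ⟨c₂, hc₂⟩
      exact ⟨c₁ + c₂, by rw [my_coe_add, hc₁, hc₂]⟩
    · rintro r m _ ⟨c, hc⟩
      exact ⟨r • c, by rw [my_coe_smul, hc]⟩
  -- the vanishing property, closed under the module operations in each variable
  set P : A → A → Prop := fun x y =>
    ∃ C : Set G, IsCompact C ∧ ∀ s ∉ C, S.α s x * y = 0 ∧ y * S.α s x = 0 with hP
  have hP0l : ∀ y, P 0 y := fun y =>
    ⟨∅, isCompact_empty, fun s _ => by simp [map_zero]⟩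
  have hP0r : ∀ x, P x 0 := fun x =>
    ⟨∅, isCompact_empty, fun s _ => by simp⟩
  have hPaddl : ∀ x₁ x₂ y, P x₁ y → P x₂ y → P (x₁ + x₂) y := by
    rintro x₁ x₂ y ⟨C₁, hC₁, h₁⟩ ⟨C₂, hC₂, h₂⟩
    refine ⟨C₁ ∪ C₂, hC₁.union hC₂, fun s hs => ?_⟩
    have hs₁ : s ∉ C₁ := fun h => hs (Or.inl h)
    have hs₂ : s ∉ C₂ := fun h => hs (Or.inr h)
    constructor
    · rw [map_add, add_mul, (h₁ s hs₁).1, (h₂ s hs₂).1, add_zero]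
    · rw [map_add, mul_add, (h₁ s hs₁).2, (h₂ s hs₂).2, add_zero]
  have hPaddr : ∀ x y₁ y₂, P x y₁ → P x y₂ → P x (y₁ + y₂) := by
    rintro x y₁ y₂ ⟨C₁, hC₁, h₁⟩ ⟨C₂, hC₂, h₂⟩
    refine ⟨C₁ ∪ C₂, hC₁.union hC₂, fun s hs => ?_⟩
    have hs₁ : s ∉ C₁ := fun h => hs (Or.inl h)
    have hs₂ : s ∉ C₂ := fun h => hs (Or.inr h)
    constructor
    · rw [mul_add, (h₁ s hs₁).1, (h₂ s hs₂).1, add_zero]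
    · rw [add_mul, (h₁ s hs₁).2, (h₂ s hs₂).2, add_zero]
  have hPsmull : ∀ (r : ℂ) x y, P x y → P (r • x) y := by
    rintro r x y ⟨C, hC, h⟩
    refine ⟨C, hC, fun s hs => ?_⟩
    constructor
    · rw [_root_.map_smul (S.α s) r x, smul_mul_assoc, (h s hs).1, smul_zero]
    · rw [_root_.map_smul (S.α s) r x, mul_smul_comm, (h s hs).2, smul_zero]
  have hPsmulr : ∀ (r : ℂ) x y, P x y → P x (r • y) := by
    rintro r x y ⟨C, hC, h⟩
    refine ⟨C, hC, fun s hs => ?_⟩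
    constructor
    · rw [mul_smul_comm, (h s hs).1, smul_zero]
    · rw [smul_mul_assoc, (h s hs).2, smul_zero]
  -- inner induction: `x` a generator, `y` anywhere in the span
  have inner : ∀ (x : A) (f g : C₀(T, ℂ)), HasCompactSupport ⇑f → HasCompactSupport ⇑g →
      ∀ a : A, (x : 𝓜(ℂ, A)) = S.φ f * (a : 𝓜(ℂ, A)) * S.φ g →
      ∀ {n : 𝓜(ℂ, A)}, n ∈ Submodule.span ℂ Sgen →
      ∀ y : A, (y : 𝓜(ℂ, A)) = n → P x y := by
    intro x f g hfc hgc a hxa n hn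
    refine Submodule.span_induction
      (p := fun n _ => ∀ y : A, (y : 𝓜(ℂ, A)) = n → P x y) ?_ ?_ ?_ ?_ hn
    · rintro m ⟨f', g', hf'c, hg'c, b, rfl⟩ y hy
      exact S.gen_vanish hfc hgc hf'c hg'c a b x y hxa hy
    · intro y hy
      have : y = 0 := my_coe_inj (by rw [hy, my_coe_zero])
      rw [this]; exact hP0r x
    · rintro m₁ m₂ h₁ h₂ ih₁ ih₂ y hy
      obtain ⟨y₁, hy₁⟩ := hrange h₁
      obtain ⟨y₂, hy₂⟩ := hrange h₂
      have : y = y₁ + y₂ := my_coe_inj (by rw [hy, my_coe_add, hy₁, hy₂])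
      rw [this]; exact hPaddr x y₁ y₂ (ih₁ y₁ hy₁) (ih₂ y₂ hy₂)
    · rintro r m hm ih y hy
      obtain ⟨y₁, hy₁⟩ := hrange hm
      have : y = r • y₁ := my_coe_inj (by rw [hy, my_coe_smul, hy₁])
      rw [this]; exact hPsmulr r x y₁ (ih y₁ hy₁)
  -- outer induction on `x`
  have outer : ∀ {m : 𝓜(ℂ, A)}, m ∈ Submodule.span ℂ Sgen →
      ∀ x : A, (x : 𝓜(ℂ, A)) = m → ∀ y : A,
        ((y : 𝓜(ℂ, A)) ∈ Submodule.span ℂ Sgen) → P x y := by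
    intro m hm
    refine Submodule.span_induction
      (p := fun m _ => ∀ x : A, (x : 𝓜(ℂ, A)) = m → ∀ y : A,
        ((y : 𝓜(ℂ, A)) ∈ Submodule.span ℂ Sgen) → P x y) ?_ ?_ ?_ ?_ hm
    · rintro m ⟨f, g, hfc, hgc, a, rfl⟩ x hxm y hy
      exact inner x f g hfc hgc a hxm hy y rfl
    · intro x hxm y hy
      have : x = 0 := my_coe_inj (by rw [hxm, my_coe_zero])
      rw [this]; exact hP0l y
    · rintro m₁ m₂ h₁ h₂ ih₁ ih₂ x hxm y hy
      obtain ⟨x₁, hx₁⟩ := hrange h₁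
      obtain ⟨x₂, hx₂⟩ := hrange h₂
      have : x = x₁ + x₂ := my_coe_inj (by rw [hxm, my_coe_add, hx₁, hx₂])
      rw [this]; exact hPaddl x₁ x₂ y (ih₁ x₁ hx₁ y hy) (ih₂ x₂ hx₂ y hy)
    · rintro r m hm ih x hxm y hy
      obtain ⟨x₁, hx₁⟩ := hrange hm
      have : x = r • x₁ := my_coe_inj (by rw [hxm, my_coe_smul, hx₁])
      rw [this]; exact hPsmull r x₁ y (ih x₁ hx₁ y hy)
  exact outer hx' x rfl y hy'

end FreeProperSetup

/-- (i) For compactly supported `f, g ∈ C₀(T)`, the set `{s ∈ G : rt_s(g)·f ≠ 0}` is contained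
in a compact subset of `G`.  (ii) Consequently, for `a, b ∈ A₀` the functions `s ↦ α_s(a)·b`
and `s ↦ b·α_s(a)` are norm-continuous, vanish outside a compact subset of `G`, and are
Bochner integrable with respect to any left Haar measure on `G`. -/
theorem orbit_compactly_supported [MeasurableSpace G] [BorelSpace G]
    (S : FreeProperSetup G T A) :
    (∀ f g : C₀(T, ℂ), HasCompactSupport ⇑f → HasCompactSupport ⇑g →
      ∃ C : Set G, IsCompact C ∧ {s : G | S.rt s g * f ≠ 0} ⊆ C) ∧
    (∀ a ∈ S.A₀, ∀ b ∈ S.A₀,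
      Continuous (fun s : G => S.α s a * b) ∧
      Continuous (fun s : G => b * S.α s a) ∧
      (∃ C : Set G, IsCompact C ∧ ∀ s ∉ C, S.α s a * b = 0 ∧ b * S.α s a = 0) ∧
      (∀ (μ : Measure G) [μ.IsHaarMeasure],
        Integrable (fun s : G => S.α s a * b) μ ∧
        Integrable (fun s : G => b * S.α s a) μ)) := by
  refine ⟨S.partI, ?_⟩
  intro a ha b hb
  have hcont₁ : Continuous (fun s : G => S.α s a * b) :=
    (S.α_continuous a).mul continuous_const
  have hcont₂ : Continuous (fun s : G => b * S.α s a) :=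
    continuous_const.mul (S.α_continuous a)
  obtain ⟨C, hC, h0⟩ := S.A₀_vanish ha hb
  have hcs₁ : HasCompactSupport (fun s : G => S.α s a * b) :=
    HasCompactSupport.intro hC fun s hs => (h0 s hs).1
  have hcs₂ : HasCompactSupport (fun s : G => b * S.α s a) :=
    HasCompactSupport.intro hC fun s hs => (h0 s hs).2
  refine ⟨hcont₁, hcont₂, ⟨C, hC, h0⟩, ?_⟩
  intro μ hμ
  exact ⟨hcont₁.integrable_of_hasCompactSupport hcs₁,
    hcont₂.integrable_of_hasCompactSupport hcs₂⟩
end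
end

section
/- For all a, b ∈ A₀, the Bochner integral ∫_N α_{tn}(a)·b dμ_N(n) depends only on the coset tN of t ∈ G; consequently there is a unique function F_{a,b} : G/N → A with F_{a,b}(q(t)) = ∫_N α_{tn}(a)·b dμ_N(n) for all t ∈ G, and this function is norm-continuous and vanishes outside a compact subset of G/N. -/
open MeasureTheory ZeroAtInfty MultiplierAlgebra
open scoped Pointwise

noncomputable section

variable (G T A : Type*) [Group G] [TopologicalSpace G] [IsTopologicalGroup G]
  [LocallyCompactSpace G] [T2Space G]
  [TopologicalSpace T] [LocallyCompactSpace T] [T2Space T]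
  [NonUnitalCStarAlgebra A]

variable {G T A}

set_option linter.unusedSectionVars false

namespace AvgAux


lemma cancel_right {x y : A} (h : ∀ z : A, x * z = y * z) : x = y := by
  have h0 : (x - y) * star (x - y) = 0 := by rw [sub_mul, h (star (x - y)), sub_self]
  have hn : ‖x - y‖ * ‖x - y‖ = 0 := by
    rw [← CStarRing.norm_self_mul_star, h0, norm_zero]
  rw [← sub_eq_zero, ← norm_eq_zero]
  exact mul_self_eq_zero.mp hn

lemma cancel_left {x y : A} (h : ∀ z : A, z * x = z * y) : x = y := by
  have h0 : star (x - y) * (x - y) = 0 := by rw [mul_sub, h (star (x - y)), sub_self]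
  have hn : ‖x - y‖ * ‖x - y‖ = 0 := by
    rw [← CStarRing.norm_star_mul_self, h0, norm_zero]
  rw [← sub_eq_zero, ← norm_eq_zero]
  exact mul_self_eq_zero.mp hn

lemma coe_inj {x y : A} (h : (x : 𝓜(ℂ, A)) = y) : x = y := by
  apply cancel_right
  intro z
  have := congrArg (fun m : 𝓜(ℂ, A) => m.fst z) h
  simpa using this

lemma coe_zero : ((0 : A) : 𝓜(ℂ, A)) = 0 := map_zero ((DoubleCentralizer.coeHom (𝕜 := ℂ) (A := A)))

lemma coe_add (x y : A) : ((x + y : A) : 𝓜(ℂ, A)) = (x : 𝓜(ℂ, A)) + y :=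
  map_add ((DoubleCentralizer.coeHom (𝕜 := ℂ) (A := A))) x y

lemma coe_smul (r : ℂ) (x : A) : ((r • x : A) : 𝓜(ℂ, A)) = r • (x : 𝓜(ℂ, A)) :=
  map_smul ((DoubleCentralizer.coeHom (𝕜 := ℂ) (A := A))) r x

lemma coe_mul (x y : A) : ((x * y : A) : 𝓜(ℂ, A)) = (x : 𝓜(ℂ, A)) * y :=
  map_mul ((DoubleCentralizer.coeHom (𝕜 := ℂ) (A := A))) x y

lemma coe_star (x : A) : ((star x : A) : 𝓜(ℂ, A)) = star (x : 𝓜(ℂ, A)) :=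
  map_star ((DoubleCentralizer.coeHom (𝕜 := ℂ) (A := A))) x

/-- `A` is a right ideal in its multiplier algebra. -/
lemma coe_mul_m (x : A) (m : 𝓜(ℂ, A)) :
    ((m.snd x : A) : 𝓜(ℂ, A)) = (x : 𝓜(ℂ, A)) * m := by
  refine DoubleCentralizer.ext ℂ A _ _ (Prod.ext ?_ ?_)
  · refine ContinuousLinearMap.ext fun z => ?_
    show ContinuousLinearMap.mul ℂ A (m.snd x) z = ((x : 𝓜(ℂ, A)) * m).fst z
    rw [DoubleCentralizer.mul_fst]
    show m.snd x * z = (x : 𝓜(ℂ, A)).fst (m.fst z)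
    rw [DoubleCentralizer.coe_fst]
    show m.snd x * z = x * m.fst z
    exact m.central x z
  · refine ContinuousLinearMap.ext fun z => ?_
    show (ContinuousLinearMap.mul ℂ A).flip (m.snd x) z = ((x : 𝓜(ℂ, A)) * m).snd z
    rw [DoubleCentralizer.mul_snd]
    show z * m.snd x = m.snd ((x : 𝓜(ℂ, A)).snd z)
    rw [DoubleCentralizer.coe_snd]
    show z * m.snd x = m.snd (z * x)
    apply cancel_right
    intro w
    rw [mul_assoc, m.central x w, m.central (z * x) w, ← mul_assoc]

/-- `A` is a left ideal in its multiplier algebra. -/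
lemma m_mul_coe (x : A) (m : 𝓜(ℂ, A)) :
    ((m.fst x : A) : 𝓜(ℂ, A)) = m * (x : 𝓜(ℂ, A)) := by
  refine DoubleCentralizer.ext ℂ A _ _ (Prod.ext ?_ ?_)
  · refine ContinuousLinearMap.ext fun z => ?_
    show ContinuousLinearMap.mul ℂ A (m.fst x) z = (m * (x : 𝓜(ℂ, A))).fst z
    rw [DoubleCentralizer.mul_fst]
    show m.fst x * z = m.fst ((x : 𝓜(ℂ, A)).fst z)
    rw [DoubleCentralizer.coe_fst]
    show m.fst x * z = m.fst (x * z)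
    apply cancel_left
    intro w
    rw [← mul_assoc, ← m.central w x, mul_assoc, m.central w (x * z)]
  · refine ContinuousLinearMap.ext fun z => ?_
    show (ContinuousLinearMap.mul ℂ A).flip (m.fst x) z = (m * (x : 𝓜(ℂ, A))).snd z
    rw [DoubleCentralizer.mul_snd]
    show z * m.fst x = (x : 𝓜(ℂ, A)).snd (m.snd z)
    rw [DoubleCentralizer.coe_snd]
    show z * m.fst x = m.snd z * x
    exact (m.central z x).symm


lemma rt_star (S : FreeProperSetup G T A) (s : G) (g : C₀(T, ℂ)) :
    S.rt s (star g) = star (S.rt s g) := by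
  ext t
  simp [S.rt_apply]

lemma equivariant_right (S : FreeProperSetup G T A) (s : G) (g : C₀(T, ℂ)) (x c : A)
    (h : (x : 𝓜(ℂ, A)) = (c : 𝓜(ℂ, A)) * S.φ g) :
    ((S.α s x : A) : 𝓜(ℂ, A)) = ((S.α s c : A) : 𝓜(ℂ, A)) * S.φ (S.rt s g) := by
  have hstar : ((star x : A) : 𝓜(ℂ, A)) = S.φ (star g) * ((star c : A) : 𝓜(ℂ, A)) := by
    rw [coe_star, h, star_mul, ← map_star S.φ g, coe_star]
  have h2 := S.φ_equivariant s (star g) (star c) (star x) hstar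
  have h3 := congrArg star h2
  rw [star_mul, ← coe_star, ← coe_star, ← map_star (S.α s) (star x),
    ← map_star (S.α s) (star c), star_star, star_star, ← map_star S.φ, rt_star,
    star_star] at h3
  exact h3

lemma gen_P (S : FreeProperSetup G T A) {f g f' g' : C₀(T, ℂ)}
    (hg : HasCompactSupport ⇑g) (hf' : HasCompactSupport ⇑f')
    (a' b' x w : A)
    (hx : (x : 𝓜(ℂ, A)) = S.φ f * (a' : 𝓜(ℂ, A)) * S.φ g)
    (hw : (w : 𝓜(ℂ, A)) = S.φ f' * (b' : 𝓜(ℂ, A)) * S.φ g') :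
    ∃ K : Set G, IsCompact K ∧ ∀ s ∉ K, S.α s x * w = 0 := by
  refine ⟨Prod.snd '' ((fun p : T × G => (p.1, S.ρ p.1 p.2)) ⁻¹'
      (tsupport ⇑f' ×ˢ tsupport ⇑g)),
    (S.ρ_proper.isCompact_preimage (hf'.prod hg)).image continuous_snd, fun s hs => ?_⟩
  -- the function `rt_s g * f'` vanishes
  have hzero : S.rt s g * f' = 0 := by
    ext t
    show S.rt s g t * f' t = 0
    rw [S.rt_apply]
    by_cases ht : f' t = 0
    · rw [ht, mul_zero]
    by_cases hgt : g (S.ρ t s) = 0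
    · rw [hgt, zero_mul]
    exact absurd ⟨(t, s), ⟨subset_tsupport _ ht, subset_tsupport _ hgt⟩, rfl⟩ hs
  -- rewrite `x` in the form needed for equivariance
  set c : A := (S.φ g).snd a' with hc
  have hcoe : (c : 𝓜(ℂ, A)) = (a' : 𝓜(ℂ, A)) * S.φ g := coe_mul_m a' (S.φ g)
  have h1 : (x : 𝓜(ℂ, A)) = S.φ f * (c : 𝓜(ℂ, A)) := by rw [hcoe, hx, mul_assoc]
  have h2 := S.φ_equivariant s f c x h1
  have h3 := equivariant_right S s g c a' hcoe
  have hφ0 : S.φ (S.rt s g) * S.φ f' = 0 := by rw [← map_mul, hzero, map_zero]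
  have key : ((S.α s x * w : A) : 𝓜(ℂ, A)) = 0 := by
    rw [coe_mul, h2, h3, hw]
    simp only [mul_assoc]
    rw [← mul_assoc (S.φ (S.rt s g)) (S.φ f'), hφ0]
    simp
  exact coe_inj (key.trans coe_zero.symm)

/-- every element of the span is the coercion of an element of `A`. -/
lemma range_lemma (S : FreeProperSetup G T A) {y : 𝓜(ℂ, A)}
    (hy : y ∈ Submodule.span ℂ
      {y : 𝓜(ℂ, A) | ∃ f g : C₀(T, ℂ), HasCompactSupport ⇑f ∧ HasCompactSupport ⇑g ∧
        ∃ a : A, y = S.φ f * (a : 𝓜(ℂ, A)) * S.φ g}) :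
    ∃ x : A, (x : 𝓜(ℂ, A)) = y := by
  induction hy using Submodule.span_induction with
  | mem y hy =>
    obtain ⟨f, g, hf, hg, a', rfl⟩ := hy
    refine ⟨(S.φ g).snd ((S.φ f).fst a'), ?_⟩
    rw [coe_mul_m, m_mul_coe]
  | zero => exact ⟨0, coe_zero⟩
  | add y z _ _ hy hz =>
    obtain ⟨x₁, rfl⟩ := hy
    obtain ⟨x₂, rfl⟩ := hz
    exact ⟨x₁ + x₂, coe_add x₁ x₂⟩
  | smul r y _ hy =>
    obtain ⟨x₁, rfl⟩ := hy
    exact ⟨r • x₁, coe_smul r x₁⟩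

lemma main_P (S : FreeProperSetup G T A) {a b : A} (ha : a ∈ S.A₀) (hb : b ∈ S.A₀) :
    ∃ K : Set G, IsCompact K ∧ ∀ s ∉ K, S.α s a * b = 0 := by
  have H : ∀ y ∈ Submodule.span ℂ
      {y : 𝓜(ℂ, A) | ∃ f g : C₀(T, ℂ), HasCompactSupport ⇑f ∧ HasCompactSupport ⇑g ∧
        ∃ a : A, y = S.φ f * (a : 𝓜(ℂ, A)) * S.φ g},
      ∀ x : A, (x : 𝓜(ℂ, A)) = y →
      ∀ z ∈ Submodule.span ℂ
      {y : 𝓜(ℂ, A) | ∃ f g : C₀(T, ℂ), HasCompactSupport ⇑f ∧ HasCompactSupport ⇑g ∧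
        ∃ a : A, y = S.φ f * (a : 𝓜(ℂ, A)) * S.φ g},
      ∀ w : A, (w : 𝓜(ℂ, A)) = z →
      ∃ K : Set G, IsCompact K ∧ ∀ s ∉ K, S.α s x * w = 0 := by
    intro y hy
    induction hy using Submodule.span_induction with
    | mem y hy =>
      obtain ⟨f, g, hf, hg, a', rfl⟩ := hy
      intro x hx z hz
      induction hz using Submodule.span_induction with
      | mem z hz =>
        obtain ⟨f', g', hf', hg', b', rfl⟩ := hz
        intro w hw
        exact gen_P S hg hf' a' b' x w hx hw
      | zero =>
        intro w hw
        have : w = 0 := coe_inj (hw.trans coe_zero.symm)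
        exact ⟨∅, isCompact_empty, fun s _ => by rw [this, mul_zero]⟩
      | add z₁ z₂ hz₁ hz₂ ih₁ ih₂ =>
        intro w hw
        obtain ⟨w₁, hw₁⟩ := range_lemma S hz₁
        obtain ⟨w₂, hw₂⟩ := range_lemma S hz₂
        obtain ⟨K₁, hK₁, h₁⟩ := ih₁ w₁ hw₁
        obtain ⟨K₂, hK₂, h₂⟩ := ih₂ w₂ hw₂
        have : w = w₁ + w₂ := coe_inj (by rw [hw, coe_add, hw₁, hw₂])
        refine ⟨K₁ ∪ K₂, hK₁.union hK₂, fun s hs => ?_⟩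
        rw [this, mul_add, h₁ s (fun h => hs (Or.inl h)), h₂ s (fun h => hs (Or.inr h)),
          add_zero]
      | smul r z hz ih =>
        intro w hw
        obtain ⟨w₀, hw₀⟩ := range_lemma S hz
        obtain ⟨K, hK, h⟩ := ih w₀ hw₀
        have : w = r • w₀ := coe_inj (by rw [hw, coe_smul, hw₀])
        refine ⟨K, hK, fun s hs => ?_⟩
        rw [this, mul_smul_comm, h s hs, smul_zero]
    | zero =>
      intro x hx z hz w hw
      have : x = 0 := coe_inj (hx.trans coe_zero.symm)
      exact ⟨∅, isCompact_empty, fun s _ => by rw [this, map_zero, zero_mul]⟩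
    | add y₁ y₂ hy₁ hy₂ ih₁ ih₂ =>
      intro x hx z hz w hw
      obtain ⟨x₁, hx₁⟩ := range_lemma S hy₁
      obtain ⟨x₂, hx₂⟩ := range_lemma S hy₂
      obtain ⟨K₁, hK₁, h₁⟩ := ih₁ x₁ hx₁ z hz w hw
      obtain ⟨K₂, hK₂, h₂⟩ := ih₂ x₂ hx₂ z hz w hw
      have : x = x₁ + x₂ := coe_inj (by rw [hx, coe_add, hx₁, hx₂])
      refine ⟨K₁ ∪ K₂, hK₁.union hK₂, fun s hs => ?_⟩
      rw [this, map_add, add_mul, h₁ s (fun h => hs (Or.inl h)), h₂ s (fun h => hs (Or.inr h)),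
        add_zero]
    | smul r y hy ih =>
      intro x hx z hz w hw
      obtain ⟨x₀, hx₀⟩ := range_lemma S hy
      obtain ⟨K, hK, h⟩ := ih x₀ hx₀ z hz w hw
      have : x = r • x₀ := coe_inj (by rw [hx, coe_smul, hx₀])
      refine ⟨K, hK, fun s hs => ?_⟩
      rw [this, _root_.map_smul, smul_mul_assoc, h s hs, smul_zero]
  exact H _ ha a rfl _ hb b rfl


end AvgAux

/-- For `a, b ∈ A₀` the integral `∫_N α_{tn}(a)·b dμ_N(n)` depends only on the coset `tN`;
the induced function `F_{a,b} : G/N → A` is the unique function with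
`F_{a,b}(q(t)) = ∫_N α_{tn}(a)·b dμ_N(n)`, and it is norm-continuous and vanishes outside a
compact subset of `G/N`. -/
theorem average_descends_to_quotient (S : FreeProperSetup G T A)
    (N : Subgroup G) [hN : N.Normal] (hNclosed : IsClosed (N : Set G))
    [MeasurableSpace ↥N] [BorelSpace ↥N] (μN : Measure ↥N) [μN.IsHaarMeasure]
    (a b : A) (ha : a ∈ S.A₀) (hb : b ∈ S.A₀) :
    (∀ t t' : G, (QuotientGroup.mk t : G ⧸ N) = QuotientGroup.mk t' →
      ∫ n : ↥N, S.α (t * ↑n) a * b ∂μN = ∫ n : ↥N, S.α (t' * ↑n) a * b ∂μN) ∧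
    ∃ F : G ⧸ N → A,
      (∀ t : G, F (QuotientGroup.mk t) = ∫ n : ↥N, S.α (t * ↑n) a * b ∂μN) ∧
      (∀ F' : G ⧸ N → A,
        (∀ t : G, F' (QuotientGroup.mk t) = ∫ n : ↥N, S.α (t * ↑n) a * b ∂μN) → F' = F) ∧
      Continuous F ∧
      ∃ C : Set (G ⧸ N), IsCompact C ∧ ∀ x ∉ C, F x = 0 := by
  classical
  obtain ⟨K, hKc, hK0⟩ := AvgAux.main_P S ha hb
  have part1 : ∀ t t' : G, (QuotientGroup.mk t : G ⧸ N) = QuotientGroup.mk t' →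
      ∫ n : ↥N, S.α (t * ↑n) a * b ∂μN = ∫ n : ↥N, S.α (t' * ↑n) a * b ∂μN := by
    intro t t' h
    have hmem : t⁻¹ * t' ∈ N := QuotientGroup.eq.mp h
    set n₀ : ↥N := ⟨t⁻¹ * t', hmem⟩ with hn₀
    have hrw : ∀ n : ↥N, t' * (↑n : G) = t * ↑(n₀ * n) := by
      intro n
      simp only [Subgroup.coe_mul, hn₀]
      group
    calc ∫ n : ↥N, S.α (t * ↑n) a * b ∂μN
        = ∫ n : ↥N, S.α (t * ↑(n₀ * n)) a * b ∂μN :=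
          (integral_mul_left_eq_self (μ := μN) (fun m : ↥N => S.α (t * ↑m) a * b) n₀).symm
      _ = ∫ n : ↥N, S.α (t' * ↑n) a * b ∂μN := by simp only [← hrw]
  refine ⟨part1, ?_⟩
  borelize A
  set f0 : G → A := fun s => S.α s a * b with hf0def
  have hf0 : Continuous f0 := (S.α_continuous a).mul continuous_const
  have hNemb : Topology.IsClosedEmbedding ((↑) : ↥N → G) :=
    hNclosed.isClosedEmbedding_subtypeVal
  have hft_cont : ∀ t : G, Continuous fun n : ↥N => f0 (t * ↑n) :=
    fun t => hf0.comp ((continuous_mul_left t).comp continuous_subtype_val)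
  have hft_supp : ∀ t : G, HasCompactSupport fun n : ↥N => f0 (t * ↑n) := by
    intro t
    apply HasCompactSupport.intro (K := Subtype.val ⁻¹' ((t⁻¹ * ·) '' K))
      (hNemb.isCompact_preimage (hKc.image (continuous_mul_left t⁻¹)))
    intro n hn
    by_contra hne
    have hmem : t * ↑n ∈ K := by
      by_contra hc
      exact hne (hK0 _ hc)
    exact hn ⟨t * ↑n, hmem, by group⟩
  have hcont : Continuous fun t : G => ∫ n : ↥N, f0 (t * ↑n) ∂μN := by
    rw [continuous_iff_continuousAt]
    intro t₀
    obtain ⟨U, hUc, hUmem⟩ := exists_compact_mem_nhds t₀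
    set L : Set ↥N := Subtype.val ⁻¹' (U⁻¹ * K) with hLdef
    have hL : IsCompact L := hNemb.isCompact_preimage (hUc.inv.mul hKc)
    have hvanish : ∀ t ∈ U, ∀ n : ↥N, n ∉ L → f0 (t * ↑n) = 0 := by
      intro t ht n hn
      apply hK0
      intro hk
      exact hn (Set.mem_mul.mpr ⟨t⁻¹, Set.inv_mem_inv.mpr ht, t * ↑n, hk, by group⟩)
    have hint : ∀ t : G, Integrable (fun n : ↥N => f0 (t * ↑n)) μN :=
      fun t => (hft_cont t).integrable_of_hasCompactSupport (hft_supp t)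
    have ht₀U : t₀ ∈ U := mem_of_mem_nhds hUmem
    refine Metric.tendsto_nhds.mpr ?_
    intro ε hε
    set M : ℝ := (μN L).toReal + 1 with hM
    have hM0 : 0 < M := by positivity
    set ε' : ℝ := ε / (2 * M) with hε'
    have hε'0 : 0 < ε' := by positivity
    set h : G × ↥N → A := fun p => f0 (p.1 * ↑p.2) - f0 (t₀ * ↑p.2) with hh
    have hhcont : Continuous h := by
      apply Continuous.sub
      · exact hf0.comp (continuous_fst.mul (continuous_subtype_val.comp continuous_snd))
      · exact (hf0.comp ((continuous_mul_left t₀).comp continuous_subtype_val)).comp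
          continuous_snd
    set W : Set (G × ↥N) := (U ×ˢ L) ∩ {p | ε' ≤ ‖h p‖} with hW
    have hWc : IsCompact W :=
      (hUc.prod hL).inter_right (isClosed_le continuous_const hhcont.norm)
    have hV : (interior U \ Prod.fst '' W) ∈ nhds t₀ := by
      apply IsOpen.mem_nhds
      · exact isOpen_interior.sdiff (hWc.image continuous_fst).isClosed
      · refine ⟨mem_interior_iff_mem_nhds.mpr hUmem, ?_⟩
        rintro ⟨p, hpW, hp1⟩
        have hzero : h p = 0 := by
          simp only [hh]
          rw [hp1, sub_self]
        have := hpW.2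
        rw [Set.mem_setOf_eq, hzero, norm_zero] at this
        exact absurd this (not_le.mpr hε'0)
    filter_upwards [hV] with t ht
    have htU : t ∈ U := interior_subset ht.1
    have hbound : ∀ n : ↥N, ‖f0 (t * ↑n) - f0 (t₀ * ↑n)‖ ≤ L.indicator (fun _ => ε') n := by
      intro n
      by_cases hn : n ∈ L
      · rw [Set.indicator_of_mem hn]
        by_contra hlt
        push_neg at hlt
        exact ht.2 ⟨(t, n), ⟨⟨htU, hn⟩, le_of_lt hlt⟩, rfl⟩
      · rw [Set.indicator_of_notMem hn, hvanish t htU n hn, hvanish t₀ ht₀U n hn, sub_self,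
          norm_zero]
    calc dist (∫ n : ↥N, f0 (t * ↑n) ∂μN) (∫ n : ↥N, f0 (t₀ * ↑n) ∂μN)
        = ‖∫ n : ↥N, (f0 (t * ↑n) - f0 (t₀ * ↑n)) ∂μN‖ := by
          rw [dist_eq_norm, ← integral_sub (hint t) (hint t₀)]
      _ ≤ ∫ n : ↥N, ‖f0 (t * ↑n) - f0 (t₀ * ↑n)‖ ∂μN := norm_integral_le_integral_norm _
      _ ≤ ∫ n : ↥N, L.indicator (fun _ => ε') n ∂μN := by
          apply integral_mono_of_nonneg (Filter.Eventually.of_forall fun n => norm_nonneg _)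
          · exact (integrable_indicator_iff hL.isClosed.measurableSet).mpr
              (integrableOn_const hL.measure_lt_top.ne)
          · exact Filter.Eventually.of_forall hbound
      _ = (μN L).toReal • ε' := integral_indicator_const ε' hL.isClosed.measurableSet
      _ ≤ M * ε' := by
          rw [smul_eq_mul]
          refine mul_le_mul_of_nonneg_right ?_ (le_of_lt hε'0)
          rw [hM]
          linarith [ENNReal.toReal_nonneg (a := μN L)]
      _ = ε / 2 := by
          rw [hε']
          field_simp
      _ < ε := by linarith
  set F : G ⧸ N → A := fun x => Quotient.liftOn' x (fun t => ∫ n : ↥N, f0 (t * ↑n) ∂μN)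
    (fun t t' hr => part1 t t' (Quotient.sound' hr)) with hFdef
  have hFmk : ∀ t : G, F (QuotientGroup.mk t) = ∫ n : ↥N, S.α (t * ↑n) a * b ∂μN :=
    fun t => rfl
  refine ⟨F, hFmk, ?_, ?_, ?_⟩
  · intro F' hF'
    funext x
    obtain ⟨t, rfl⟩ := QuotientGroup.mk_surjective x
    rw [hF' t, hFmk t]
  · exact (QuotientGroup.isQuotientMap_mk N).continuous_iff.mpr hcont
  · refine ⟨QuotientGroup.mk '' K, hKc.image QuotientGroup.continuous_mk, ?_⟩
    intro x hx
    obtain ⟨t, rfl⟩ := QuotientGroup.mk_surjective x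
    rw [hFmk t]
    have hz : ∀ n : ↥N, S.α (t * ↑n) a * b = 0 := by
      intro n
      apply hK0
      intro hk
      refine hx ⟨t * ↑n, hk, ?_⟩
      refine QuotientGroup.eq.mpr ?_
      have h1 : (t * (↑n : G))⁻¹ * t = (↑n : G)⁻¹ := by group
      rw [h1]
      exact N.inv_mem n.2
    simp only [hz, integral_zero]
end
end
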